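/- If (a_i) is a nonnegative decreasing sequence defined on an integer interval J, and I ⊆ J is an L-skipped set (i.e., |i−j| ≥ L for distinct i,j ∈ I), then ∑_{i∈I} a_i ≤ (1/L)∑_{i∈J} a_i + sup_{i∈J} a_i. -/

import Mathlib

/-- If `(a i)` is a nonnegative decreasing sequence on the integer
interval `J = Icc lo hi` and `I ⊆ J` is an `L`-skipped set (distinct elements differ
by at least `L`), then `∑_{i∈I} a i ≤ (1/L) ∑_{i∈J} a i + sup_{i∈J} a i`. -/
theorem stmt0 (L : ℕ) (hL : 0 < L) (lo hi : ℕ) (hle : lo ≤ hi) (a : ℕ → ℝ)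
    (hnn : ∀ i ∈ Finset.Icc lo hi, 0 ≤ a i)
    (hdec : ∀ i ∈ Finset.Icc lo hi, ∀ j ∈ Finset.Icc lo hi, i ≤ j → a j ≤ a i)
    (I : Finset ℕ) (hIJ : I ⊆ Finset.Icc lo hi)
    (hskip : ∀ i ∈ I, ∀ j ∈ I, i < j → i + L ≤ j) :
    ∑ i ∈ I, a i ≤
      (1 / (L : ℝ)) * ∑ i ∈ Finset.Icc lo hi, a i +
        (Finset.Icc lo hi).sup' (Finset.nonempty_Icc.mpr hle) a := by
  set J := Finset.Icc lo hi with hJ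
  have hsumJ : 0 ≤ ∑ i ∈ J, a i := Finset.sum_nonneg hnn
  have hsup0 : 0 ≤ J.sup' (Finset.nonempty_Icc.mpr hle) a := by
    refine le_trans (hnn lo ?_) (Finset.le_sup' a ?_) <;>
      simp [hJ, Finset.mem_Icc, hle]
  have hLpos : (0:ℝ) < L := by exact_mod_cast hL
  rcases I.eq_empty_or_nonempty with rfl | hI
  · simp
    positivity
  · set m := I.min' hI with hm
    have hmI : m ∈ I := I.min'_mem hI
    have hmJ := hIJ hmI
    have hmlo : lo ≤ m := (Finset.mem_Icc.mp hmJ).1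
    set I' := I.erase m with hI'
    -- each i in I' has i ≥ lo + L
    have hkey : ∀ i ∈ I', lo + L ≤ i ∧ i ≤ hi := by
      intro i hi'
      have hiI : i ∈ I := Finset.mem_of_mem_erase hi'
      have hne : i ≠ m := Finset.ne_of_mem_erase hi'
      have hmi : m < i := lt_of_le_of_ne (I.min'_le i hiI) (Ne.symm hne)
      have := hskip m hmI i hiI hmi
      exact ⟨le_trans (by omega) this, (Finset.mem_Icc.mp (hIJ hiI)).2⟩
    -- block bound
    have hblock : ∀ i ∈ I', (L:ℝ) * a i ≤ ∑ j ∈ Finset.Ico (i - L) i, a j := by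
      intro i hi'
      obtain ⟨h1, h2⟩ := hkey i hi'
      have hsub : Finset.Ico (i - L) i ⊆ J := by
        intro j hj
        rw [Finset.mem_Ico] at hj
        rw [hJ, Finset.mem_Icc]
        omega
      have hcard : (Finset.Ico (i - L) i).card = L := by
        rw [Nat.card_Ico]; omega
      have : (Finset.Ico (i - L) i).card • a i ≤ ∑ j ∈ Finset.Ico (i - L) i, a j := by
        refine Finset.card_nsmul_le_sum _ _ _ ?_
        intro j hj
        refine hdec j (hsub hj) i ?_ ?_
        · rw [hJ, Finset.mem_Icc]; omega
        · exact le_of_lt (Finset.mem_Ico.mp hj).2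
      rw [hcard, nsmul_eq_mul] at this
      exact this
    -- disjointness of blocks
    have hdisj : (I' : Set ℕ).PairwiseDisjoint (fun i => Finset.Ico (i - L) i) := by
      intro i hi j hj hne
      simp only [Finset.mem_coe] at hi hj
      have hiI : i ∈ I := Finset.mem_of_mem_erase hi
      have hjI : j ∈ I := Finset.mem_of_mem_erase hj
      rcases lt_or_gt_of_ne hne with h | h
      · have := hskip i hiI j hjI h
        refine Finset.disjoint_left.mpr fun x hx hx' => ?_
        rw [Finset.mem_Ico] at hx hx'
        omega
      · have := hskip j hjI i hiI h
        refine Finset.disjoint_left.mpr fun x hx hx' => ?_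
        rw [Finset.mem_Ico] at hx hx'
        omega
    have hmain : (L:ℝ) * ∑ i ∈ I', a i ≤ ∑ i ∈ J, a i := by
      calc (L:ℝ) * ∑ i ∈ I', a i = ∑ i ∈ I', (L:ℝ) * a i := Finset.mul_sum _ _ _
        _ ≤ ∑ i ∈ I', ∑ j ∈ Finset.Ico (i - L) i, a j :=
            Finset.sum_le_sum hblock
        _ = ∑ j ∈ I'.biUnion (fun i => Finset.Ico (i - L) i), a j :=
            (Finset.sum_biUnion hdisj).symm
        _ ≤ ∑ i ∈ J, a i := by
            refine Finset.sum_le_sum_of_subset_of_nonneg ?_ (fun i hi _ => hnn i hi)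
            intro x hx
            rw [Finset.mem_biUnion] at hx
            obtain ⟨i, hi, hxi⟩ := hx
            obtain ⟨h1, h2⟩ := hkey i hi
            rw [Finset.mem_Ico] at hxi
            rw [hJ, Finset.mem_Icc]
            omega
    have hsplit : ∑ i ∈ I, a i = a m + ∑ i ∈ I', a i :=
      (Finset.add_sum_erase I a hmI).symm
    have h1 : ∑ i ∈ I', a i ≤ (1 / (L:ℝ)) * ∑ i ∈ J, a i := by
      rw [one_div, inv_mul_eq_div, le_div_iff₀ hLpos]
      linarith [hmain]
    have h2 : a m ≤ J.sup' (Finset.nonempty_Icc.mpr hle) a := Finset.le_sup' a hmJ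
    rw [hsplit]
    linarith
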